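/- Let A* = max_{1≤i≤C} max(0, i − V(i)) (with A* = 0 if C = 0). Then (a) the set S* = {A*+1, …, C} admits a feasible assignment, and (b) every set S ⊆ {1,…,C} admitting a feasible assignment satisfies |S| ≤ C − A*. Consequently, the minimum number of skipped chunks over all feasible assignments equals A*, and this minimum is achieved by skipping exactly the first A* chunks. -/

import Mathlib

/-- Cumulative bandwidth of a link up to time `t`: `R(t) = Σ_{j=1}^t B(j)`. -/
noncomputable def cumBW (B : ℕ → ℝ) (t : ℕ) : ℝ := ∑ j ∈ Finset.Icc 1 t, B j

/-- `V(i) = Σ_{u=1}^U ⌊min(η_u, R_u(d(i)))/Y⌋`. -/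
noncomputable def Vval (U : ℕ) (Y : ℝ) (d : ℕ → ℕ) (B : Fin U → ℕ → ℝ)
    (η : Fin U → ℝ) (i : ℕ) : ℕ :=
  ∑ u : Fin U, ⌊min (η u) (cumBW (B u) (d i)) / Y⌋₊

/-- A feasible assignment for a set `S` of chunks: a link choice `ℓ i` and download
amounts `z i j ≥ 0` so that each chunk `i ∈ S` gets its full layer of size `Y` over
link `ℓ i` by its deadline `d i`, respecting per-slot bandwidths and per-link
maximum contributions. -/
def FeasibleAssignment (U : ℕ) (Y : ℝ) (d : ℕ → ℕ) (B : Fin U → ℕ → ℝ)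
    (η : Fin U → ℝ) (S : Finset ℕ) : Prop :=
  ∃ (ℓ : ℕ → Fin U) (z : ℕ → ℕ → ℝ),
    (∀ i ∈ S, ∀ j, 0 ≤ z i j) ∧
    (∀ i ∈ S, ∑ j ∈ Finset.Icc 1 (d i), z i j = Y) ∧
    (∀ i ∈ S, ∀ j, (j < 1 ∨ d i < j) → z i j = 0) ∧
    (∀ u : Fin U, ∀ j, 1 ≤ j →
      ∑ i ∈ S.filter (fun i => ℓ i = u), z i j ≤ B u j) ∧
    (∀ u : Fin U,
      ∑ i ∈ S.filter (fun i => ℓ i = u), ∑ j ∈ Finset.Icc 1 (d i), z i j ≤ η u)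

lemma cumBW_nonneg {B : ℕ → ℝ} (hB : ∀ j, 1 ≤ j → 0 ≤ B j) (t : ℕ) : 0 ≤ cumBW B t :=
  Finset.sum_nonneg fun j hj => hB j (Finset.mem_Icc.mp hj).1

lemma cumBW_mono {B : ℕ → ℝ} (hB : ∀ j, 1 ≤ j → 0 ≤ B j) : Monotone (cumBW B) := by
  intro s t hst
  exact Finset.sum_le_sum_of_subset_of_nonneg (Finset.Icc_subset_Icc_right hst)
    (fun j hj _ => hB j (Finset.mem_Icc.mp hj).1)

section Helpers

/-- Telescoping sum over `Icc 1 n`. -/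
lemma sum_Icc_sub (f : ℕ → ℝ) (n : ℕ) : ∑ j ∈ Finset.Icc 1 n, (f j - f (j-1)) = f n - f 0 := by
  rw [← Finset.Ico_add_one_right_eq_Icc, Finset.sum_Ico_eq_sum_range (fun j => f j - f (j-1)) 1 (n+1)]
  rw [show n + 1 - 1 = n by omega]
  have h : ∀ i, f (1 + i) - f (1 + i - 1) = f (i + 1) - f i := by intro i; congr 2 <;> omega
  rw [Finset.sum_congr rfl (fun i _ => h i)]
  exact Finset.sum_range_sub f n

/-- Key interval-length identity. -/
lemma clamp_id (a b x y : ℝ) (hab : a ≤ b) (hxy : x ≤ y) :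
    max 0 (min y b - max x a) = (min y b - min y a) - (min x b - min x a) := by
  simp only [max_def, min_def]
  split_ifs <;> linarith

lemma min_sub_min_le (x y t : ℝ) (hxy : x ≤ y) : min y t - min x t ≤ y - x := by
  rcases le_total y t with h | h <;> rcases le_total x t with h' | h' <;>
    simp [min_def] <;> split_ifs <;> linarith

end Helpers

section Greedy
variable {U : ℕ}

/-- Pick a link with remaining capacity. -/
noncomputable def pickL (F : Fin U → ℕ → ℕ) (h0 : 0 < U) (cnt : Fin U → ℕ) (i : ℕ) : Fin U :=
  if h : ∃ u, cnt u < F u i then h.choose else ⟨0, h0⟩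

lemma pickL_spec {F : Fin U → ℕ → ℕ} (h0 : 0 < U) {cnt : Fin U → ℕ} {i : ℕ}
    (h : ∃ u, cnt u < F u i) : cnt (pickL F h0 cnt i) < F (pickL F h0 cnt i) i := by
  rw [pickL, dif_pos h]; exact h.choose_spec

/-- Per-link counters after greedily processing chunks `a+1, …, i`. -/
noncomputable def stv (F : Fin U → ℕ → ℕ) (h0 : 0 < U) (a : ℕ) : ℕ → Fin U → ℕ
  | 0 => fun _ => 0
  | (i+1) => fun u => stv F h0 a i u +
      (if a + 1 ≤ i + 1 ∧ u = pickL F h0 (stv F h0 a i) (i+1) then 1 else 0)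

/-- The link chosen for chunk `i`. -/
noncomputable def lnk (F : Fin U → ℕ → ℕ) (h0 : 0 < U) (a : ℕ) (i : ℕ) : Fin U :=
  pickL F h0 (stv F h0 a (i-1)) i

lemma stv_sum (F : Fin U → ℕ → ℕ) (h0 : 0 < U) (a : ℕ) :
    ∀ i, ∑ u, stv F h0 a i u = i - a := by
  intro i
  induction i with
  | zero => simp [stv]
  | succ i ih =>
    simp only [stv, Finset.sum_add_distrib, ih]
    have h2 : ∀ u : Fin U, (if a + 1 ≤ i + 1 ∧ u = pickL F h0 (stv F h0 a i) (i+1) then 1 else 0)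
        = (if u = pickL F h0 (stv F h0 a i) (i+1) then (if a + 1 ≤ i + 1 then 1 else 0) else 0) := by
      intro u; by_cases h : a + 1 ≤ i + 1 <;> by_cases h' : u = pickL F h0 (stv F h0 a i) (i+1) <;>
        simp [h, h']
    rw [Finset.sum_congr rfl (fun u _ => h2 u), Finset.sum_ite_eq' Finset.univ]
    simp only [Finset.mem_univ, if_true]
    split_ifs with h <;> omega

lemma stv_mono (F : Fin U → ℕ → ℕ) (h0 : 0 < U) (a : ℕ) (u : Fin U) :
    Monotone (fun i => stv F h0 a i u) := by
  apply monotone_nat_of_le_succ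
  intro i
  simp only [stv]
  exact Nat.le_add_right _ _

lemma stv_le_F {F : Fin U → ℕ → ℕ} {h0 : 0 < U} {a C : ℕ}
    (hmono : ∀ u, Monotone (F u))
    (hsum : ∀ i, a + 1 ≤ i → i ≤ C → i - a ≤ ∑ u, F u i) :
    ∀ i, i ≤ C → ∀ u, stv F h0 a i u ≤ F u i := by
  intro i
  induction i with
  | zero => intro _ u; simp [stv]
  | succ i ih =>
    intro hC u
    have ih' := ih (le_trans (Nat.le_succ i) hC)
    by_cases hcase : a + 1 ≤ i + 1
    · have hex : ∃ v, stv F h0 a i v < F v (i+1) := by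
        by_contra hno
        push_neg at hno
        have h1 : ∑ v, F v (i+1) ≤ ∑ v, stv F h0 a i v := Finset.sum_le_sum fun v _ => hno v
        rw [stv_sum] at h1
        have h2 := hsum (i+1) hcase hC
        omega
      by_cases hu : u = pickL F h0 (stv F h0 a i) (i+1)
      · have := pickL_spec h0 hex
        simp only [stv, hcase, hu, and_self, if_true, true_and]
        omega
      · simp only [stv, hu, and_false, if_false, add_zero]
        exact le_trans (ih' u) (hmono u (Nat.le_succ i))
    · simp only [stv, hcase, false_and, if_false, add_zero]
      exact le_trans (ih' u) (hmono u (Nat.le_succ i))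

lemma stv_succ_lnk (F : Fin U → ℕ → ℕ) (h0 : 0 < U) (a i : ℕ) (hi : a + 1 ≤ i + 1) :
    stv F h0 a (i+1) (lnk F h0 a (i+1)) = stv F h0 a i (lnk F h0 a (i+1)) + 1 := by
  have : lnk F h0 a (i+1) = pickL F h0 (stv F h0 a i) (i+1) := by
    simp [lnk]
  simp [stv, hi, this]

lemma stv_card (F : Fin U → ℕ → ℕ) (h0 : 0 < U) (a : ℕ) (u : Fin U) :
    ∀ i, stv F h0 a i u = ((Finset.Icc (a+1) i).filter (fun k => lnk F h0 a k = u)).card := by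
  intro i
  induction i with
  | zero =>
    rw [Finset.Icc_eq_empty (by omega)]
    simp [stv]
  | succ i ih =>
    by_cases hcase : a + 1 ≤ i + 1
    · rw [← Finset.insert_Icc_right_eq_Icc_add_one hcase, Finset.filter_insert]
      have hlnk : lnk F h0 a (i+1) = pickL F h0 (stv F h0 a i) (i+1) := by simp [lnk]
      by_cases hu : lnk F h0 a (i+1) = u
      · rw [if_pos hu, Finset.card_insert_of_notMem (by simp)]
        simp only [stv, hcase, true_and, ih]
        rw [if_pos (by rw [← hu, hlnk])]
      · rw [if_neg hu]
        simp only [stv, hcase, true_and, ih]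
        rw [if_neg (by rw [hlnk] at hu; exact fun h => hu h.symm)]
        omega
    · rw [Finset.Icc_eq_empty (by omega)]
      simp only [stv, hcase, false_and, if_false, add_zero, ih]
      rw [Finset.Icc_eq_empty (by omega)]

end Greedy

section Construction

lemma lnk_step {U : ℕ} {F : Fin U → ℕ → ℕ} (h0 : 0 < U) {a C : ℕ}
    (hsum : ∀ i, a + 1 ≤ i → i ≤ C → i - a ≤ ∑ u, F u i)
    {i : ℕ} (h1 : a + 1 ≤ i) (h2 : i ≤ C) :
    stv F h0 a i (lnk F h0 a i) = stv F h0 a (i-1) (lnk F h0 a i) + 1 ∧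
    stv F h0 a (i-1) (lnk F h0 a i) < F (lnk F h0 a i) i := by
  obtain ⟨k, rfl⟩ : ∃ k, i = k + 1 := ⟨i - 1, by omega⟩
  have hk : k + 1 - 1 = k := by omega
  have hex : ∃ v, stv F h0 a k v < F v (k+1) := by
    by_contra hno
    push_neg at hno
    have hle : ∑ v, F v (k+1) ≤ ∑ v, stv F h0 a k v := Finset.sum_le_sum fun v _ => hno v
    rw [stv_sum] at hle
    have := hsum (k+1) h1 h2
    omega
  constructor
  · rw [hk]; exact stv_succ_lnk F h0 a k h1
  · rw [hk]
    have : lnk F h0 a (k+1) = pickL F h0 (stv F h0 a k) (k+1) := by simp [lnk]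
    rw [this]
    exact pickL_spec h0 hex

lemma feasible_construction
    (C U : ℕ) (hU : 1 ≤ U) (Y : ℝ) (hY : 0 < Y)
    (d : ℕ → ℕ) (hd : Monotone d)
    (B : Fin U → ℕ → ℝ) (hB : ∀ u j, 1 ≤ j → 0 ≤ B u j)
    (η : Fin U → ℝ) (hη : ∀ u, 0 ≤ η u)
    (a : ℕ) (hsum : ∀ i, a + 1 ≤ i → i ≤ C → i - a ≤ Vval U Y d B η i) :
    FeasibleAssignment U Y d B η (Finset.Icc (a + 1) C) := by
  classical
  set F : Fin U → ℕ → ℕ := fun u i => ⌊min (η u) (cumBW (B u) (d i)) / Y⌋₊ with hF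
  have h0 : 0 < U := hU
  have hBn : ∀ u : Fin U, ∀ j, 1 ≤ j → 0 ≤ B u j := hB
  have hRmono : ∀ u : Fin U, Monotone (cumBW (B u)) := fun u => cumBW_mono (hBn u)
  have hRnn : ∀ u : Fin U, ∀ t, 0 ≤ cumBW (B u) t := fun u => cumBW_nonneg (hBn u)
  have hmonoF : ∀ u, Monotone (F u) := by
    intro u i i' hii'
    apply Nat.floor_le_floor
    have h1 : min (η u) (cumBW (B u) (d i)) ≤ min (η u) (cumBW (B u) (d i')) :=
      min_le_min le_rfl (hRmono u (hd hii'))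
    exact div_le_div_of_nonneg_right h1 hY.le
  have hsum' : ∀ i, a + 1 ≤ i → i ≤ C → i - a ≤ ∑ u, F u i := hsum
  -- the assignment
  set L : ℕ → Fin U := lnk F h0 a with hL
  set c : ℕ → ℕ := fun i => stv F h0 a i (L i) with hc
  set z : ℕ → ℕ → ℝ := fun i j =>
    max 0 (min (cumBW (B (L i)) j) ((c i : ℝ) * Y)
      - max (cumBW (B (L i)) (j - 1)) (((c i : ℝ) - 1) * Y)) with hz
  -- basic facts about chunks in range
  have hstep : ∀ i, a + 1 ≤ i → i ≤ C →
      c i = stv F h0 a (i-1) (L i) + 1 ∧ stv F h0 a (i-1) (L i) < F (L i) i :=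
    fun i h1 h2 => lnk_step h0 hsum' h1 h2
  have hc1 : ∀ i, a + 1 ≤ i → i ≤ C → 1 ≤ c i := fun i h1 h2 => by
    have := (hstep i h1 h2).1; omega
  have hcF : ∀ i, a + 1 ≤ i → i ≤ C → c i ≤ F (L i) i := fun i h1 h2 => by
    have h := hstep i h1 h2; omega
  have hcY : ∀ i, a + 1 ≤ i → i ≤ C →
      (c i : ℝ) * Y ≤ min (η (L i)) (cumBW (B (L i)) (d i)) := by
    intro i h1 h2
    have hfl : (c i : ℝ) ≤ ⌊min (η (L i)) (cumBW (B (L i)) (d i)) / Y⌋₊ := by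
      exact_mod_cast hcF i h1 h2
    have hmn : 0 ≤ min (η (L i)) (cumBW (B (L i)) (d i)) / Y :=
      div_nonneg (le_min (hη _) (hRnn _ _)) hY.le
    have := le_trans hfl (Nat.floor_le hmn)
    calc (c i : ℝ) * Y ≤ (min (η (L i)) (cumBW (B (L i)) (d i)) / Y) * Y := by
          exact mul_le_mul_of_nonneg_right this hY.le
      _ = min (η (L i)) (cumBW (B (L i)) (d i)) := by field_simp
  have hab : ∀ i, a + 1 ≤ i → i ≤ C → ((c i : ℝ) - 1) * Y ≤ (c i : ℝ) * Y := by
    intro i h1 h2; nlinarith [hY.le]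
  -- z i j rewritten via the ψ-difference form
  have hzeq : ∀ i, a + 1 ≤ i → i ≤ C → ∀ j : ℕ,
      z i j = (min (cumBW (B (L i)) j) ((c i : ℝ) * Y)
                - min (cumBW (B (L i)) j) (((c i : ℝ) - 1) * Y))
            - (min (cumBW (B (L i)) (j-1)) ((c i : ℝ) * Y)
                - min (cumBW (B (L i)) (j-1)) (((c i : ℝ) - 1) * Y)) := by
    intro i h1 h2 j
    exact clamp_id _ _ _ _ (hab i h1 h2) (hRmono (L i) (Nat.sub_le j 1))
  have htotal : ∀ i, a + 1 ≤ i → i ≤ C → ∑ j ∈ Finset.Icc 1 (d i), z i j = Y := by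
    intro i h1 h2
    set G : ℕ → ℝ := fun t => min (cumBW (B (L i)) t) ((c i : ℝ) * Y)
      - min (cumBW (B (L i)) t) (((c i : ℝ) - 1) * Y) with hG
    have : ∀ j ∈ Finset.Icc 1 (d i), z i j = G j - G (j-1) := fun j _ => hzeq i h1 h2 j
    rw [Finset.sum_congr rfl this, sum_Icc_sub G (d i)]
    have hR0 : cumBW (B (L i)) 0 = 0 := by simp [cumBW]
    have hG0 : G 0 = 0 := by
      have hcp : (0:ℝ) ≤ ((c i : ℝ) - 1) * Y := by
        have := hc1 i h1 h2
        have : (1:ℝ) ≤ (c i : ℝ) := by exact_mod_cast this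
        nlinarith [hY.le]
      have hcp2 : (0:ℝ) ≤ (c i : ℝ) * Y := by positivity
      simp [hG, hR0, min_eq_left hcp, min_eq_left hcp2]
    have hRd : (c i : ℝ) * Y ≤ cumBW (B (L i)) (d i) :=
      le_trans (hcY i h1 h2) (min_le_right _ _)
    have hGd : G (d i) = Y := by
      rw [hG]
      simp only []
      rw [min_eq_right hRd, min_eq_right (le_trans (hab i h1 h2) hRd)]
      ring
    rw [hG0, hGd]; ring
  refine ⟨L, z, ?_, ?_, ?_, ?_, ?_⟩
  · -- nonnegativity
    intro i _ j
    exact le_max_left _ _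
  · -- total = Y
    intro i hi
    rw [Finset.mem_Icc] at hi
    exact htotal i hi.1 hi.2
  · -- zero outside window
    intro i hi j hj
    rw [Finset.mem_Icc] at hi
    have h1 := hi.1; have h2 := hi.2
    rcases hj with hj | hj
    · -- j = 0
      interval_cases j
      have hR0 : cumBW (B (L i)) 0 = 0 := by simp [cumBW]
      have hcp : (0:ℝ) ≤ ((c i : ℝ) - 1) * Y := by
        have h1' : (1:ℝ) ≤ (c i : ℝ) := by exact_mod_cast hc1 i h1 h2
        nlinarith [hY.le]
      have hcp2 : (0:ℝ) ≤ (c i : ℝ) * Y := by positivity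
      show max 0 (min (cumBW (B (L i)) 0) _ - max (cumBW (B (L i)) (0-1)) _) = 0
      rw [show (0:ℕ) - 1 = 0 from rfl, hR0]
      rw [min_eq_left hcp2, max_eq_right hcp]
      simp [hcp]
    · -- j > d i
      have hRd : (c i : ℝ) * Y ≤ cumBW (B (L i)) (j - 1) :=
        le_trans (le_trans (hcY i h1 h2) (min_le_right _ _)) (hRmono (L i) (by omega))
      show max 0 _ = 0
      rw [max_eq_left]
      have hmin : min (cumBW (B (L i)) j) ((c i : ℝ) * Y) ≤ (c i : ℝ) * Y := min_le_right _ _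
      have hmax : (c i : ℝ) * Y ≤ max (cumBW (B (L i)) (j-1)) (((c i : ℝ) - 1) * Y) :=
        le_trans hRd (le_max_left _ _)
      linarith
  · -- per-slot bandwidth
    intro u j hj
    set R : ℕ → ℝ := cumBW (B u) with hR
    set ψ : ℕ → ℝ := fun m => min (R j) ((m : ℝ) * Y) - min (R (j-1)) ((m : ℝ) * Y) with hψ
    have hxy : R (j-1) ≤ R j := hRmono u (Nat.sub_le j 1)
    have hψmono : Monotone ψ := by
      apply monotone_nat_of_le_succ
      intro m
      have hid := clamp_id ((m:ℝ) * Y) (((m:ℕ)+1 : ℝ) * Y) (R (j-1)) (R j)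
        (by nlinarith [hY.le]) hxy
      have hnn : (0:ℝ) ≤ max 0 (min (R j) (((m:ℕ)+1 : ℝ) * Y) - max (R (j-1)) ((m:ℝ) * Y)) :=
        le_max_left _ _
      have : ψ (m+1) - ψ m = max 0 (min (R j) (((m:ℕ)+1 : ℝ) * Y) - max (R (j-1)) ((m:ℝ) * Y)) := by
        rw [hid]; push_cast [hψ]; ring
      linarith
    set filt := (Finset.Icc (a+1) C).filter (fun i => L i = u) with hfilt
    have hmem : ∀ i ∈ filt, a + 1 ≤ i ∧ i ≤ C ∧ L i = u := by
      intro i hi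
      rw [hfilt, Finset.mem_filter, Finset.mem_Icc] at hi
      exact ⟨hi.1.1, hi.1.2, hi.2⟩
    have hzψ : ∀ i ∈ filt, z i j = ψ (c i) - ψ (c i - 1) := by
      intro i hi
      obtain ⟨h1, h2, hLu⟩ := hmem i hi
      have hcast : ((c i - 1 : ℕ) : ℝ) = (c i : ℝ) - 1 := by
        have := hc1 i h1 h2; push_cast [Nat.cast_sub this]; ring
      rw [hzeq i h1 h2 j, hψ]
      simp only [hcast, hLu, hR]
      ring
    have hstrict : ∀ i ∈ filt, ∀ i' ∈ filt, i < i' → c i < c i' := by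
      intro i hi i' hi' hlt
      obtain ⟨h1, h2, hLu⟩ := hmem i hi
      obtain ⟨h1', h2', hLu'⟩ := hmem i' hi'
      have e1 : c i' = stv F h0 a (i'-1) (L i') + 1 := (hstep i' h1' h2').1
      have e2 : stv F h0 a i (L i) ≤ stv F h0 a (i'-1) (L i') := by
        rw [hLu, hLu']
        exact stv_mono F h0 a u (by omega)
      have : c i = stv F h0 a i (L i) := rfl
      omega
    have hinj : ∀ x ∈ filt, ∀ y ∈ filt, c x = c y → x = y := by
      intro x hx y hy hcxy
      rcases lt_trichotomy x y with h | h | h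
      · exact absurd hcxy (by have := hstrict x hx y hy h; omega)
      · exact h
      · exact absurd hcxy (by have := hstrict y hy x hx h; omega)
    have himg := Finset.sum_image (s := filt) (g := c) (f := fun m => ψ m - ψ (m-1)) hinj
    rw [Finset.sum_congr rfl hzψ, ← himg]
    set N := stv F h0 a C u with hN
    have himsub : filt.image c ⊆ Finset.Icc 1 N := by
      intro m hm
      rw [Finset.mem_image] at hm
      obtain ⟨i, hi, rfl⟩ := hm
      obtain ⟨h1, h2, hLu⟩ := hmem i hi
      rw [Finset.mem_Icc]
      refine ⟨hc1 i h1 h2, ?_⟩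
      have : c i = stv F h0 a i u := by
        rw [show c i = stv F h0 a i (L i) from rfl, hLu]
      rw [this, hN]
      exact stv_mono F h0 a u h2
    have hnonneg : ∀ m ∈ Finset.Icc 1 N, (0:ℝ) ≤ ψ m - ψ (m-1) := by
      intro m _
      have := hψmono (Nat.sub_le m 1)
      linarith
    have hsub := Finset.sum_le_sum_of_subset_of_nonneg himsub
      (fun m hm _ => hnonneg m hm)
    have htel : ∑ m ∈ Finset.Icc 1 N, (ψ m - ψ (m-1)) = ψ N - ψ 0 := sum_Icc_sub ψ N
    have hψ0 : ψ 0 = 0 := by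
      simp [hψ, min_eq_right (show (0:ℝ) ≤ R j from hRnn u j), min_eq_right (show (0:ℝ) ≤ R (j-1) from hRnn u (j-1))]
    have hψN : ψ N ≤ R j - R (j-1) := min_sub_min_le _ _ _ hxy
    have hBj : R j - R (j-1) = B u j := by
      obtain ⟨k, rfl⟩ : ∃ k, j = k + 1 := ⟨j - 1, by omega⟩
      rw [hR, show k + 1 - 1 = k from rfl]
      rw [show cumBW (B u) (k+1) = cumBW (B u) k + B u (k+1) from
        Finset.sum_Icc_succ_top (by omega) (B u)]
      ring
    calc ∑ m ∈ filt.image c, (ψ m - ψ (m-1))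
        ≤ ∑ m ∈ Finset.Icc 1 N, (ψ m - ψ (m-1)) := hsub
      _ = ψ N - ψ 0 := htel
      _ ≤ (R j - R (j-1)) - 0 := by rw [hψ0]; linarith
      _ = B u j := by rw [← hBj]; ring
  · -- per-link total
    intro u
    set filt := (Finset.Icc (a+1) C).filter (fun i => L i = u) with hfilt
    have hsumY : ∀ i ∈ filt, ∑ j ∈ Finset.Icc 1 (d i), z i j = Y := by
      intro i hi
      rw [hfilt, Finset.mem_filter, Finset.mem_Icc] at hi
      obtain ⟨⟨h1, h2⟩, hLu⟩ := hi
      exact htotal i h1 h2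
    rw [Finset.sum_congr rfl hsumY, Finset.sum_const, nsmul_eq_mul]
    have hcard : filt.card = stv F h0 a C u := (stv_card F h0 a u C).symm
    have hFC : stv F h0 a C u ≤ F u C := stv_le_F hmonoF hsum' C le_rfl u
    have hFCY : (F u C : ℝ) * Y ≤ η u := by
      have hmn : 0 ≤ min (η u) (cumBW (B u) (d C)) / Y :=
        div_nonneg (le_min (hη _) (hRnn _ _)) hY.le
      have h1 : (F u C : ℝ) ≤ min (η u) (cumBW (B u) (d C)) / Y := Nat.floor_le hmn
      have h2 : (F u C : ℝ) * Y ≤ (min (η u) (cumBW (B u) (d C)) / Y) * Y :=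
        mul_le_mul_of_nonneg_right h1 hY.le
      have h3 : (min (η u) (cumBW (B u) (d C)) / Y) * Y = min (η u) (cumBW (B u) (d C)) := by
        field_simp
      rw [h3] at h2
      exact le_trans h2 (min_le_left _ _)
    calc (filt.card : ℝ) * Y ≤ (F u C : ℝ) * Y := by
          apply mul_le_mul_of_nonneg_right _ hY.le
          exact_mod_cast hcard ▸ (Nat.cast_le.mpr hFC)
      _ ≤ η u := hFCY

end Construction

section Counting

lemma card_filter_le_V
    (U : ℕ) (Y : ℝ) (hY : 0 < Y)
    (d : ℕ → ℕ) (hd : Monotone d)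
    (B : Fin U → ℕ → ℝ) (hB : ∀ u j, 1 ≤ j → 0 ≤ B u j)
    (η : Fin U → ℝ) (hη : ∀ u, 0 ≤ η u)
    (S : Finset ℕ) (hfeas : FeasibleAssignment U Y d B η S) (i : ℕ) :
    (S.filter (fun k => k ≤ i)).card ≤ Vval U Y d B η i := by
  classical
  obtain ⟨ℓ, z, hz0, hzY, hzout, hslot, heta⟩ := hfeas
  rw [Vval]
  have hfib : (S.filter (fun k => k ≤ i)).card =
      ∑ u : Fin U, ((S.filter (fun k => k ≤ i)).filter (fun k => ℓ k = u)).card :=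
    Finset.card_eq_sum_card_fiberwise (fun x _ => Finset.mem_univ (ℓ x))
  rw [hfib]
  apply Finset.sum_le_sum
  intro u _
  set T := (S.filter (fun k => k ≤ i)).filter (fun k => ℓ k = u) with hT
  have hTmem : ∀ k ∈ T, k ∈ S ∧ k ≤ i ∧ ℓ k = u := by
    intro k hk
    rw [hT, Finset.mem_filter, Finset.mem_filter] at hk
    exact ⟨hk.1.1, hk.1.2, hk.2⟩
  have hTsub : T ⊆ S.filter (fun k => ℓ k = u) := by
    intro k hk
    obtain ⟨h1, _, h3⟩ := hTmem k hk
    rw [Finset.mem_filter]; exact ⟨h1, h3⟩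
  have hcardY : (T.card : ℝ) * Y = ∑ k ∈ T, ∑ j ∈ Finset.Icc 1 (d k), z k j := by
    rw [Finset.sum_congr rfl (fun k hk => hzY k (hTmem k hk).1), Finset.sum_const,
      nsmul_eq_mul]
  have hinner_nonneg : ∀ k ∈ S.filter (fun k => ℓ k = u),
      (0:ℝ) ≤ ∑ j ∈ Finset.Icc 1 (d k), z k j := by
    intro k hk
    exact Finset.sum_nonneg fun j _ => hz0 k (Finset.mem_filter.mp hk).1 j
  have h_eta : ∑ k ∈ T, ∑ j ∈ Finset.Icc 1 (d k), z k j ≤ η u := by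
    refine le_trans (Finset.sum_le_sum_of_subset_of_nonneg hTsub
      (fun k hk _ => hinner_nonneg k hk)) (heta u)
  have h_bw : ∑ k ∈ T, ∑ j ∈ Finset.Icc 1 (d k), z k j ≤ cumBW (B u) (d i) := by
    have step1 : ∑ k ∈ T, ∑ j ∈ Finset.Icc 1 (d k), z k j ≤
        ∑ k ∈ T, ∑ j ∈ Finset.Icc 1 (d i), z k j := by
      apply Finset.sum_le_sum
      intro k hk
      obtain ⟨h1, h2, _⟩ := hTmem k hk
      exact Finset.sum_le_sum_of_subset_of_nonneg
        (Finset.Icc_subset_Icc_right (hd h2)) (fun j _ _ => hz0 k h1 j)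
    refine le_trans step1 ?_
    rw [Finset.sum_comm]
    rw [cumBW]
    apply Finset.sum_le_sum
    intro j hj
    have hj1 : 1 ≤ j := (Finset.mem_Icc.mp hj).1
    refine le_trans (Finset.sum_le_sum_of_subset_of_nonneg hTsub
      (fun k hk _ => hz0 k (Finset.mem_filter.mp hk).1 j)) (hslot u j hj1)
  have hmin : (T.card : ℝ) * Y ≤ min (η u) (cumBW (B u) (d i)) := by
    rw [hcardY]
    exact le_min h_eta h_bw
  apply Nat.le_floor
  rw [le_div_iff₀ hY]
  exact hmin

end Counting

/-- The minimum number of skipped chunks is `A* = max_{1 ≤ i ≤ C} max(0, i − V(i))`: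
(a) the set `{A*+1, …, C}` admits a feasible assignment, and (b) every feasible set
`S ⊆ {1,…,C}` has `|S| ≤ C − A*`. -/
theorem min_skips_eq_forward_scan
    (C U : ℕ) (hU : 1 ≤ U) (Y : ℝ) (hY : 0 < Y)
    (d : ℕ → ℕ) (hd : Monotone d)
    (B : Fin U → ℕ → ℝ) (hB : ∀ u j, 1 ≤ j → 0 ≤ B u j)
    (η : Fin U → ℝ) (hη : ∀ u, 0 ≤ η u)
    (Astar : ℕ) (hA : Astar = (Finset.Icc 1 C).sup (fun i => i - Vval U Y d B η i)) :
    FeasibleAssignment U Y d B η (Finset.Icc (Astar + 1) C) ∧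
    ∀ S ⊆ Finset.Icc 1 C, FeasibleAssignment U Y d B η S → S.card ≤ C - Astar := by
  classical
  constructor
  · apply feasible_construction C U hU Y hY d hd B hB η hη
    intro i h1 h2
    have hmem : i ∈ Finset.Icc 1 C := Finset.mem_Icc.mpr ⟨by omega, h2⟩
    have h3 : i - Vval U Y d B η i ≤ Astar := by
      rw [hA]
      exact Finset.le_sup (f := fun i => i - Vval U Y d B η i) hmem
    omega
  · intro S hS hfeas
    by_cases hC : 1 ≤ C
    · have hne : (Finset.Icc 1 C).Nonempty := ⟨1, Finset.mem_Icc.mpr ⟨le_rfl, hC⟩⟩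
      obtain ⟨i0, hi0mem, hi0⟩ := Finset.exists_mem_eq_sup (Finset.Icc 1 C) hne
        (fun i => i - Vval U Y d B η i)
      rw [Finset.mem_Icc] at hi0mem
      have hAeq : Astar = i0 - Vval U Y d B η i0 := by rw [hA, hi0]
      have h1 : (S.filter (fun k => k ≤ i0)).card ≤ Vval U Y d B η i0 :=
        card_filter_le_V U Y hY d hd B hB η hη S hfeas i0
      have h2 : (S.filter (fun k => ¬ k ≤ i0)).card ≤ C - i0 := by
        have hsub : S.filter (fun k => ¬ k ≤ i0) ⊆ Finset.Icc (i0 + 1) C := by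
          intro k hk
          rw [Finset.mem_filter] at hk
          have := hS hk.1
          rw [Finset.mem_Icc] at this ⊢
          omega
        calc (S.filter (fun k => ¬ k ≤ i0)).card ≤ (Finset.Icc (i0+1) C).card :=
              Finset.card_le_card hsub
          _ = C - i0 := by rw [Nat.card_Icc]; omega
      have h3 := Finset.card_filter_add_card_filter_not
        (s := S) (p := fun k => k ≤ i0)
      have h4 : S.card ≤ C := by
        calc S.card ≤ (Finset.Icc 1 C).card := Finset.card_le_card hS
          _ = C := by rw [Nat.card_Icc]; omega
      omega
    · have : S = ∅ := by
        rw [← Finset.subset_empty]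
        intro k hk
        have := hS hk
        rw [Finset.mem_Icc] at this
        omega
      simp [this]
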